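/- Let (G,<) be a left-ordered group with a central, positive, cofinal element z. For each coset g⟨z⟩ there is a unique minimal representative ḡ ∈ g⟨z⟩ with id ≤ ḡ < z. Define c_<(g₁⟨z⟩, g₂⟨z⟩, g₃⟨z⟩) = sign(σ) where σ is the unique permutation in S₃ with ḡ_{σ(1)} < ḡ_{σ(2)} < ḡ_{σ(3)}, for distinct cosets, and 0 otherwise. Then c_< is a well-defined circular ordering on G/⟨z⟩. -/

import Mathlib

open scoped Classical

noncomputable section

/-- A (left-invariant) circular ordering on a group `G`, as an orientation cocycle. -/
def IsCircularOrdering {G : Type*} [Group G] (c : G → G → G → ℤ) : Prop :=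
  (∀ a b d : G, c a b d = 0 ↔ a = b ∨ b = d ∨ a = d) ∧
  (∀ a b d : G, c a b d = 1 ∨ c a b d = 0 ∨ c a b d = -1) ∧
  (∀ a₁ a₂ a₃ a₄ : G, c a₂ a₃ a₄ - c a₁ a₃ a₄ + c a₁ a₂ a₄ - c a₁ a₂ a₃ = 0) ∧
  (∀ g a₁ a₂ a₃ : G, c (g * a₁) (g * a₂) (g * a₃) = c a₁ a₂ a₃)

/-- The normalized 2-cocycle `f_c` associated to a circular ordering `c`:
`f_c a b = 0` if `a = 1` or `b = 1` or `c 1 a (a*b) = 1`, and `1` otherwise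
(i.e. when `a*b = 1` with `a ≠ 1`, or `c 1 (a*b) a = 1`). -/
def fc {G : Type*} [Group G] (c : G → G → G → ℤ) (a b : G) : ℤ :=
  if a = 1 ∨ b = 1 ∨ c 1 a (a * b) = 1 then 0 else 1

/-- Cyclic orientation of a triple of integers. -/
def Zc (a b d : ℤ) : ℤ :=
  if a = b ∨ b = d ∨ a = d then 0
  else if (a < b ∧ b < d) ∨ (b < d ∧ d < a) ∨ (d < a ∧ a < b) then 1 else -1

theorem Zc_cocycle (a b c d : ℤ) : Zc b c d - Zc a c d + Zc a b d - Zc a b c = 0 := by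
  simp only [Zc]; split_ifs <;> omega

/-- Cyclic orientation of a triple with respect to a binary relation. -/
def Fc {G : Type*} (lt : G → G → Prop) (a b d : G) : ℤ :=
  if a = b ∨ b = d ∨ a = d then 0
  else if (lt a b ∧ lt b d) ∨ (lt b d ∧ lt d a) ∨ (lt d a ∧ lt a b) then 1 else -1

theorem Fc_eq_Zc {G : Type*} (lt : G → G → Prop) (a b d : G) (ra rb rd : ℤ)
    (e1 : a = b ↔ ra = rb) (e2 : b = d ↔ rb = rd) (e3 : a = d ↔ ra = rd)
    (l1 : lt a b ↔ ra < rb) (l2 : lt b d ↔ rb < rd) (l3 : lt d a ↔ rd < ra) :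
    Fc lt a b d = Zc ra rb rd := by
  simp only [Fc, Zc, e1, e2, e3, l1, l2, l3]

/-- A rank function into `ℤ` reflecting a strict total order on a finite list. -/
theorem rank_exists {G : Type*} (lt : G → G → Prop) (hsto : IsStrictTotalOrder G lt)
    (L : List G) :
    ∃ r : G → ℤ, ∀ x ∈ L, ∀ y ∈ L, (lt x y ↔ r x < r y) ∧ (x = y ↔ r x = r y) := by
  haveI := hsto
  classical
  refine ⟨fun x => ((L.toFinset.filter fun t => ¬lt x t).card : ℤ), ?_⟩
  have mono : ∀ x ∈ L, ∀ y ∈ L, lt x y →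
      (L.toFinset.filter fun t => ¬lt x t).card < (L.toFinset.filter fun t => ¬lt y t).card := by
    intro x hx y hy hxy
    apply Finset.card_lt_card
    rw [Finset.ssubset_iff_of_subset]
    · refine ⟨y, Finset.mem_filter.2 ⟨List.mem_toFinset.2 hy, irrefl_of lt y⟩, ?_⟩
      simp only [Finset.mem_filter, not_and, not_not]
      intro _; exact hxy
    · intro t ht
      simp only [Finset.mem_filter] at ht ⊢
      refine ⟨ht.1, fun hyt => ht.2 (trans_of lt hxy hyt)⟩
  intro x hx y hy
  dsimp only
  constructor
  · constructor
    · intro h; have := mono x hx y hy h; omega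
    · intro h
      rcases trichotomous_of lt x y with h' | h' | h'
      · exact h'
      · subst h'; omega
      · have := mono y hy x hx h'; omega
  · constructor
    · rintro rfl; rfl
    · intro h
      rcases trichotomous_of lt x y with h' | h' | h'
      · have := mono x hx y hy h'; omega
      · exact h'
      · have := mono y hy x hx h'; omega

set_option maxHeartbeats 3000000 in
/-- Quotient construction: each coset of `⟨z⟩` has a unique minimal representative in `[1,z)`,
and sorting minimal representatives yields a well-defined circular ordering on `G/⟨z⟩`. -/
theorem stmt3 {G : Type*} [Group G] (lt : G → G → Prop)
    (hsto : IsStrictTotalOrder G lt)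
    (hinv : ∀ f g h : G, lt g h → lt (f * g) (f * h))
    (z : G) (hzc : ∀ g : G, z * g = g * z) (hzpos : lt 1 z)
    (hcof : ∀ g : G, ∃ k : ℤ, lt (z ^ (-k)) g ∧ lt g (z ^ k))
    [hnrm : (Subgroup.zpowers z).Normal] :
    (∀ g : G, ∃! x : G, (∃ k : ℤ, x = g * z ^ k) ∧ ¬lt x 1 ∧ lt x z) ∧
    ∃ cbar : G ⧸ Subgroup.zpowers z → G ⧸ Subgroup.zpowers z → G ⧸ Subgroup.zpowers z → ℤ,
      IsCircularOrdering cbar ∧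
      ∀ g₁ g₂ g₃ x₁ x₂ x₃ : G,
        ((∃ k : ℤ, x₁ = g₁ * z ^ k) ∧ ¬lt x₁ 1 ∧ lt x₁ z) →
        ((∃ k : ℤ, x₂ = g₂ * z ^ k) ∧ ¬lt x₂ 1 ∧ lt x₂ z) →
        ((∃ k : ℤ, x₃ = g₃ * z ^ k) ∧ ¬lt x₃ 1 ∧ lt x₃ z) →
        (g₁ : G ⧸ Subgroup.zpowers z) ≠ (g₂ : G ⧸ Subgroup.zpowers z) →
        (g₂ : G ⧸ Subgroup.zpowers z) ≠ (g₃ : G ⧸ Subgroup.zpowers z) →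
        (g₁ : G ⧸ Subgroup.zpowers z) ≠ (g₃ : G ⧸ Subgroup.zpowers z) →
        cbar (g₁ : G ⧸ Subgroup.zpowers z) (g₂ : G ⧸ Subgroup.zpowers z)
            (g₃ : G ⧸ Subgroup.zpowers z) =
          if (lt x₁ x₂ ∧ lt x₂ x₃) ∨ (lt x₂ x₃ ∧ lt x₃ x₁) ∨ (lt x₃ x₁ ∧ lt x₁ x₂) then 1
          else -1 := by
  classical
  haveI := hsto
  have tri : ∀ a b : G, lt a b ∨ a = b ∨ lt b a := fun a b => trichotomous_of lt a b
  have tr : ∀ {a b c : G}, lt a b → lt b c → lt a c := fun h1 h2 => trans_of lt h1 h2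
  have irr : ∀ a : G, ¬lt a a := fun a => irrefl_of lt a
  have asym : ∀ {a b : G}, lt a b → ¬lt b a := fun h h' => irr _ (tr h h')
  have hz' : ∀ (k : ℤ) (g : G), z ^ k * g = g * z ^ k := fun k g =>
    ((show Commute z g from hzc g).zpow_left k)
  have hzinv : ∀ g : G, z⁻¹ * g = g * z⁻¹ := fun g =>
    ((show Commute z g from hzc g).inv_left.eq)
  have hinv' : ∀ (f : G) {a b : G}, lt (f * a) (f * b) → lt a b := by
    intro f a b h
    have := hinv f⁻¹ _ _ h
    simpa using this
  have rmul : ∀ (k : ℤ) {a b : G}, lt a b → lt (a * z ^ k) (b * z ^ k) := by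
    intro k a b h
    rw [← hz', ← hz']
    exact hinv _ _ _ h
  have rmul' : ∀ (k : ℤ) {a b : G}, lt (a * z ^ k) (b * z ^ k) → lt a b := by
    intro k a b h
    rw [← hz', ← hz'] at h
    exact hinv' _ h
  have hpos : ∀ n : ℤ, 1 ≤ n → lt 1 (z ^ n) := by
    have step : ∀ n : ℤ, 1 ≤ n → lt 1 (z ^ n) → lt 1 (z ^ (n + 1)) := by
      intro n hn ih
      have h1 : lt (z ^ n * 1) (z ^ n * z) := hinv _ _ _ hzpos
      have h2 : lt (z ^ n) (z ^ (n + 1)) := by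
        rw [zpow_add, zpow_one]; simpa using h1
      exact tr ih h2
    exact Int.le_induction (motive := fun n _ => lt 1 (z ^ n)) (by simpa using hzpos) step
  have zpow_lt : ∀ {m n : ℤ}, m < n → lt (z ^ m) (z ^ n) := by
    intro m n h
    have h1 : lt 1 (z ^ (n - m)) := hpos _ (by omega)
    have h2 := hinv (z ^ m) _ _ h1
    rw [mul_one, ← zpow_add] at h2
    have e : m + (n - m) = n := by ring
    rwa [e] at h2
  have nlt_iff : ∀ a b : G, ¬lt b a ↔ (lt a b ∨ a = b) := by
    intro a b
    constructor
    · intro h; rcases tri a b with h' | h' | h' <;> tauto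
    · rintro (h | rfl)
      · exact asym h
      · exact irr a
  -- existence and uniqueness of minimal representatives
  have hrep : ∀ g : G, ∃! x : G, (∃ k : ℤ, x = g * z ^ k) ∧ ¬lt x 1 ∧ lt x z := by
    intro g
    obtain ⟨k, hk1, hk2⟩ := hcof g
    have e1 : z ^ k * z ^ (-k) = 1 := by rw [← zpow_add]; simp
    have e2 : z ^ (-k) * z ^ k = 1 := by rw [← zpow_add]; simp
    have hSk : ¬lt (g * z ^ k) 1 := by
      have h := hinv (z ^ k) _ _ hk1
      rw [e1, hz'] at h
      exact asym h
    have hbdd : ∀ n : ℤ, ¬lt (g * z ^ n) 1 → -k ≤ n := by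
      intro n hn
      by_contra hc
      push_neg at hc
      apply hn
      have h1 : lt (g * z ^ n) (g * z ^ (-k)) := hinv g _ _ (zpow_lt (by omega))
      have h2 : lt (g * z ^ (-k)) 1 := by
        have h := hinv (z ^ (-k)) _ _ hk2
        rwa [e2, hz'] at h
      exact tr h1 h2
    obtain ⟨m, hm, hmin⟩ := Int.exists_least_of_bdd ⟨-k, hbdd⟩ ⟨k, hSk⟩
    have hltz : lt (g * z ^ m) z := by
      by_contra hc
      have hS : ¬lt (g * z ^ (m - 1)) 1 := by
        intro h
        apply hc
        have h2 := rmul 1 h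
        rw [one_mul, zpow_one, mul_assoc] at h2
        have e : z ^ (m - 1) * z = z ^ m := by
          have e2 : m - 1 + 1 = m := by ring
          rw [← zpow_add_one, e2]
        rwa [e] at h2
      have := hmin _ hS
      omega
    have key : ∀ a b : ℤ, ¬lt (g * z ^ a) 1 → lt (g * z ^ b) z → ¬a < b := by
      intro a b ha hb hab
      have h1 : ¬lt (g * z ^ a * z ^ (b - a)) (1 * z ^ (b - a)) := fun h => ha (rmul' _ h)
      rw [one_mul, mul_assoc, ← zpow_add] at h1
      have e : a + (b - a) = b := by ring
      rw [e] at h1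
      rcases (nlt_iff _ _).1 h1 with h | h
      · have hz1 : ¬lt (z ^ (b - a)) z := by
          rcases Int.lt_or_le 1 (b - a) with hba | hba
          · have h3 := zpow_lt (show (1 : ℤ) < b - a from hba)
            rw [zpow_one] at h3
            exact asym h3
          · have hba' : b - a = 1 := by omega
            rw [hba', zpow_one]; exact irr z
        exact hz1 (tr h hb)
      · rw [← h] at hb
        rcases Int.lt_or_le 1 (b - a) with hba | hba
        · have h3 := zpow_lt (show (1 : ℤ) < b - a from hba)
          rw [zpow_one] at h3
          exact asym h3 hb
        · have hba' : b - a = 1 := by omega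
          rw [hba', zpow_one] at hb
          exact irr z hb
    refine ⟨g * z ^ m, ⟨⟨m, rfl⟩, hm, hltz⟩, ?_⟩
    rintro x ⟨⟨n, rfl⟩, hx1, hx2⟩
    have h1 := key n m hx1 hltz
    have h2 := key m n hm hx2
    have : n = m := by omega
    rw [this]
  refine ⟨hrep, ?_⟩
  -- the normal form function
  set nf : G → G := fun g => Classical.choose (hrep g).exists with hnfdef
  have nf_spec : ∀ g : G, (∃ k : ℤ, nf g = g * z ^ k) ∧ ¬lt (nf g) 1 ∧ lt (nf g) z :=
    fun g => Classical.choose_spec (hrep g).exists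
  have nf_unique : ∀ g x : G, ((∃ k : ℤ, x = g * z ^ k) ∧ ¬lt x 1 ∧ lt x z) → x = nf g := by
    intro g x hx
    obtain ⟨y, _, hu⟩ := hrep g
    rw [hu x hx, hu (nf g) (nf_spec g)]
  have nf_mk : ∀ g : G, (g : G ⧸ Subgroup.zpowers z) = (nf g : G ⧸ Subgroup.zpowers z) := by
    intro g
    obtain ⟨⟨k, hk⟩, -, -⟩ := nf_spec g
    rw [hk]
    refine (QuotientGroup.eq).2 (Subgroup.mem_zpowers_iff.2 ⟨k, ?_⟩)
    group
  have rep_mk : ∀ g : G,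
      nf (Quotient.out (g : G ⧸ Subgroup.zpowers z)) = nf g := by
    intro g
    have h : ((Quotient.out (g : G ⧸ Subgroup.zpowers z) : G) : G ⧸ Subgroup.zpowers z)
        = (g : G ⧸ Subgroup.zpowers z) := QuotientGroup.out_eq' _
    obtain ⟨j, hj⟩ : ∃ j : ℤ, Quotient.out (g : G ⧸ Subgroup.zpowers z) = g * z ^ j := by
      obtain ⟨j, hj⟩ := Subgroup.mem_zpowers_iff.1 ((QuotientGroup.eq).1 h.symm)
      exact ⟨j, by rw [hj]; group⟩
    obtain ⟨⟨k, hk⟩, h1, h2⟩ := nf_spec (Quotient.out (g : G ⧸ Subgroup.zpowers z))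
    refine nf_unique g _ ⟨⟨j + k, ?_⟩, h1, h2⟩
    rw [hk, hj, mul_assoc, ← zpow_add]
  have rep_inj : ∀ q q' : G ⧸ Subgroup.zpowers z,
      nf (Quotient.out q) = nf (Quotient.out q') → q = q' := by
    intro q q' h
    calc q = ((Quotient.out q : G) : G ⧸ Subgroup.zpowers z) := (QuotientGroup.out_eq' q).symm
      _ = ((nf (Quotient.out q) : G) : G ⧸ Subgroup.zpowers z) := nf_mk _
      _ = ((nf (Quotient.out q') : G) : G ⧸ Subgroup.zpowers z) := by rw [h]
      _ = ((Quotient.out q' : G) : G ⧸ Subgroup.zpowers z) := (nf_mk _).symm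
      _ = q' := QuotientGroup.out_eq' q'
  have nf_congr : ∀ u v : G,
      (u : G ⧸ Subgroup.zpowers z) = (v : G ⧸ Subgroup.zpowers z) → nf u = nf v := by
    intro u v h
    rw [← rep_mk u, ← rep_mk v, h]
  refine ⟨fun q1 q2 q3 =>
    Fc lt (nf (Quotient.out q1)) (nf (Quotient.out q2)) (nf (Quotient.out q3)),
    ⟨⟨?_, ?_, ?_, ?_⟩, ?_⟩⟩
  · -- zero iff degenerate
    intro a b d
    dsimp only
    constructor
    · intro h
      by_contra hc
      push_neg at hc
      obtain ⟨h1, h2, h3⟩ := hc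
      have n1 : nf (Quotient.out a) ≠ nf (Quotient.out b) := fun e => h1 (rep_inj _ _ e)
      have n2 : nf (Quotient.out b) ≠ nf (Quotient.out d) := fun e => h2 (rep_inj _ _ e)
      have n3 : nf (Quotient.out a) ≠ nf (Quotient.out d) := fun e => h3 (rep_inj _ _ e)
      have hne : ¬(nf (Quotient.out a) = nf (Quotient.out b) ∨
          nf (Quotient.out b) = nf (Quotient.out d) ∨
          nf (Quotient.out a) = nf (Quotient.out d)) := by tauto
      simp only [Fc, if_neg hne] at h
      split_ifs at h <;> omega
    · intro h
      rcases h with h | h | h <;> (subst h; simp [Fc])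
  · -- values
    intro a b d
    dsimp only
    simp only [Fc]
    split_ifs <;> tauto
  · -- cocycle
    intro a1 a2 a3 a4
    dsimp only
    obtain ⟨r, hr⟩ := rank_exists lt hsto
      [nf (Quotient.out a1), nf (Quotient.out a2), nf (Quotient.out a3), nf (Quotient.out a4)]
    have m1 : nf (Quotient.out a1) ∈
        [nf (Quotient.out a1), nf (Quotient.out a2), nf (Quotient.out a3), nf (Quotient.out a4)] := by simp
    have m2 : nf (Quotient.out a2) ∈
        [nf (Quotient.out a1), nf (Quotient.out a2), nf (Quotient.out a3), nf (Quotient.out a4)] := by simp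
    have m3 : nf (Quotient.out a3) ∈
        [nf (Quotient.out a1), nf (Quotient.out a2), nf (Quotient.out a3), nf (Quotient.out a4)] := by simp
    have m4 : nf (Quotient.out a4) ∈
        [nf (Quotient.out a1), nf (Quotient.out a2), nf (Quotient.out a3), nf (Quotient.out a4)] := by simp
    have key : ∀ {x y w : G},
        x ∈ [nf (Quotient.out a1), nf (Quotient.out a2), nf (Quotient.out a3), nf (Quotient.out a4)] →
        y ∈ [nf (Quotient.out a1), nf (Quotient.out a2), nf (Quotient.out a3), nf (Quotient.out a4)] →
        w ∈ [nf (Quotient.out a1), nf (Quotient.out a2), nf (Quotient.out a3), nf (Quotient.out a4)] →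
        Fc lt x y w = Zc (r x) (r y) (r w) := by
      intro x y w hx hy hw
      exact Fc_eq_Zc lt x y w _ _ _ (hr x hx y hy).2 (hr y hy w hw).2 (hr x hx w hw).2
        (hr x hx y hy).1 (hr y hy w hw).1 (hr w hw x hx).1
    rw [key m2 m3 m4, key m1 m3 m4, key m1 m2 m4, key m1 m2 m3]
    exact Zc_cocycle _ _ _ _
  · -- left invariance
    intro g a1 a2 a3
    obtain ⟨gg, rfl⟩ := QuotientGroup.mk_surjective g
    obtain ⟨w1, rfl⟩ := QuotientGroup.mk_surjective a1
    obtain ⟨w2, rfl⟩ := QuotientGroup.mk_surjective a2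
    obtain ⟨w3, rfl⟩ := QuotientGroup.mk_surjective a3
    dsimp only
    have hmm : ∀ w : G, ((gg : G ⧸ Subgroup.zpowers z) * (w : G ⧸ Subgroup.zpowers z))
        = ((gg * w : G) : G ⧸ Subgroup.zpowers z) := fun w => rfl
    rw [show ((gg : G ⧸ Subgroup.zpowers z) * (w1 : G ⧸ Subgroup.zpowers z)) = ((gg * w1 : G) : G ⧸ Subgroup.zpowers z) from hmm w1,
       show ((gg : G ⧸ Subgroup.zpowers z) * (w2 : G ⧸ Subgroup.zpowers z)) = ((gg * w2 : G) : G ⧸ Subgroup.zpowers z) from hmm w2,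
       show ((gg : G ⧸ Subgroup.zpowers z) * (w3 : G ⧸ Subgroup.zpowers z)) = ((gg * w3 : G) : G ⧸ Subgroup.zpowers z) from hmm w3]
    rw [rep_mk (gg * w1), rep_mk (gg * w2), rep_mk (gg * w3), rep_mk w1, rep_mk w2, rep_mk w3]
    have hcs : ∀ w : G, nf (gg * w) = nf (gg * nf w) := by
      intro w
      refine nf_congr _ _ ?_
      rw [← hmm w, ← hmm (nf w), ← nf_mk]
    rw [hcs w1, hcs w2, hcs w3]
    obtain ⟨hx11, hx12⟩ := (nf_spec w1).2
    obtain ⟨hx21, hx22⟩ := (nf_spec w2).2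
    obtain ⟨hx31, hx32⟩ := (nf_spec w3).2
    set x1 := nf w1 with hx1def
    set x2 := nf w2 with hx2def
    set x3 := nf w3 with hx3def
    obtain ⟨⟨k, hk⟩, hw1, hw2⟩ := nf_spec gg
    have hge : ∀ x : G, ¬lt x 1 → ¬lt (gg * x * z ^ k) (nf gg) := by
      intro x h1 h
      rcases (nlt_iff 1 x).1 h1 with h' | h'
      · have l1 : lt gg (gg * x) := by
          have := hinv gg _ _ h'
          rwa [mul_one] at this
        have l2 := rmul k l1
        rw [← hk] at l2
        exact asym l2 h
      · rw [← h', mul_one, ← hk] at h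
        exact irr _ h
    have hub : ∀ x : G, lt x z → lt (gg * x * z ^ k) (nf gg * z) := by
      intro x h2
      have l2 := rmul k (hinv gg _ _ h2)
      have e : gg * z * z ^ k = nf gg * z := by rw [hk]; group
      rwa [e] at l2
    have main : ∀ x : G, ¬lt x 1 → lt x z →
        nf (gg * x) = if lt (gg * x * z ^ k) z then gg * x * z ^ k
          else gg * x * z ^ k * z⁻¹ := by
      intro x h1 h2
      split_ifs with hP
      · refine (nf_unique _ _ ⟨⟨k, rfl⟩, ?_, hP⟩).symm
        intro hlt1
        rcases (nlt_iff 1 (nf gg)).1 hw1 with h' | h'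
        · exact hge x h1 (tr hlt1 h')
        · exact hge x h1 (by rwa [← h'])
      · have h1' : ¬lt (gg * x * z ^ k * z⁻¹) 1 := by
          intro hlt
          apply hP
          have h2' := hinv z _ _ hlt
          have e : z * (gg * x * z ^ k * z⁻¹) = gg * x * z ^ k := by
            rw [hzc]; group
          rwa [mul_one, e] at h2'
        have h2' : lt (gg * x * z ^ k * z⁻¹) (nf gg) := by
          have h3 := hinv z⁻¹ _ _ (hub x h2)
          have e1 : z⁻¹ * (gg * x * z ^ k) = gg * x * z ^ k * z⁻¹ := hzinv _
          have e2 : z⁻¹ * (nf gg * z) = nf gg := by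
            rw [hzinv]; group
          rwa [e1, e2] at h3
        refine (nf_unique _ _ ⟨⟨k - 1, by group⟩, h1', tr h2' hw2⟩).symm
    have iffPP : ∀ x x' : G, (lt x x' ↔ lt (gg * x * z ^ k) (gg * x' * z ^ k)) ∧
        (x = x' ↔ gg * x * z ^ k = gg * x' * z ^ k) := by
      intro x x'
      refine ⟨⟨fun h => rmul k (hinv gg _ _ h), fun h => hinv' gg (rmul' k h)⟩, ?_⟩
      constructor
      · rintro rfl; rfl
      · intro h; exact mul_left_cancel (mul_right_cancel h)
    have iffI : ∀ a b : G, (lt a b ↔ lt (a * z⁻¹) (b * z⁻¹)) ∧ (a = b ↔ a * z⁻¹ = b * z⁻¹) := by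
      intro a b
      refine ⟨⟨fun h => ?_, fun h => ?_⟩, ⟨fun h => by rw [h], fun h => mul_right_cancel h⟩⟩
      · have := hinv z⁻¹ _ _ h
        rwa [hzinv, hzinv] at this
      · have := hinv z _ _ h
        rwa [hzc, hzc, inv_mul_cancel_right, inv_mul_cancel_right] at this
    have mixed : ∀ x x' : G, ¬lt x 1 → lt x' z →
        lt (gg * x * z ^ k) z → ¬lt (gg * x' * z ^ k) z →
        lt x x' ∧ lt (gg * x' * z ^ k * z⁻¹) (gg * x * z ^ k) := by
      intro x x' h1 h2' hPx hPx'
      constructor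
      · refine hinv' gg (rmul' k ?_)
        rcases (nlt_iff z (gg * x' * z ^ k)).1 hPx' with h' | h'
        · exact tr hPx h'
        · rwa [← h']
      · have ha : lt (gg * x' * z ^ k * z⁻¹) (nf gg) := by
          have h3 := hinv z⁻¹ _ _ (hub x' h2')
          rwa [hzinv, show z⁻¹ * (nf gg * z) = nf gg from by rw [hzinv]; group] at h3
        rcases (nlt_iff (nf gg) (gg * x * z ^ k)).1 (hge x h1) with h' | h'
        · exact tr ha h'
        · rwa [h'] at ha
    set L := [x1, x2, x3, nf (gg * x1), nf (gg * x2), nf (gg * x3)] with hL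
    obtain ⟨r, hr⟩ := rank_exists lt hsto L
    have m1 : x1 ∈ L := by rw [hL]; simp
    have m2 : x2 ∈ L := by rw [hL]; simp
    have m3 : x3 ∈ L := by rw [hL]; simp
    have m4 : nf (gg * x1) ∈ L := by rw [hL]; simp
    have m5 : nf (gg * x2) ∈ L := by rw [hL]; simp
    have m6 : nf (gg * x3) ∈ L := by rw [hL]; simp
    have cv : ∀ {a b : G}, a ∈ L → b ∈ L → (lt a b ↔ r a < r b) := fun ha hb => (hr _ ha _ hb).1
    have ce : ∀ {a b : G}, a ∈ L → b ∈ L → (a = b ↔ r a = r b) := fun ha hb => (hr _ ha _ hb).2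
    have conv : ∀ {x y w : G}, x ∈ L → y ∈ L → w ∈ L →
        Fc lt x y w = Zc (r x) (r y) (r w) := fun hx hy hw =>
      Fc_eq_Zc lt _ _ _ _ _ _ (ce hx hy) (ce hy hw) (ce hx hw) (cv hx hy) (cv hy hw) (cv hw hx)
    rw [conv m4 m5 m6, conv m1 m2 m3]
    have e1 := main x1 hx11 hx12
    have e2 := main x2 hx21 hx22
    have e3 := main x3 hx31 hx32
    by_cases hP1 : lt (gg * x1 * z ^ k) z <;> by_cases hP2 : lt (gg * x2 * z ^ k) z <;>
      by_cases hP3 : lt (gg * x3 * z ^ k) z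
    · -- PPP
      rw [if_pos hP1] at e1; rw [if_pos hP2] at e2; rw [if_pos hP3] at e3
      rw [e1, e2, e3]
      have n1 : gg * x1 * z ^ k ∈ L := e1 ▸ m4
      have n2 : gg * x2 * z ^ k ∈ L := e2 ▸ m5
      have n3 : gg * x3 * z ^ k ∈ L := e3 ▸ m6
      have f12 : r x1 < r x2 ↔ r (gg * x1 * z ^ k) < r (gg * x2 * z ^ k) := by
        rw [← cv m1 m2, ← cv n1 n2]; exact (iffPP x1 x2).1
      have g12 : r x1 = r x2 ↔ r (gg * x1 * z ^ k) = r (gg * x2 * z ^ k) := by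
        rw [← ce m1 m2, ← ce n1 n2]; exact (iffPP x1 x2).2
      have f13 : r x1 < r x3 ↔ r (gg * x1 * z ^ k) < r (gg * x3 * z ^ k) := by
        rw [← cv m1 m3, ← cv n1 n3]; exact (iffPP x1 x3).1
      have g13 : r x1 = r x3 ↔ r (gg * x1 * z ^ k) = r (gg * x3 * z ^ k) := by
        rw [← ce m1 m3, ← ce n1 n3]; exact (iffPP x1 x3).2
      have f23 : r x2 < r x3 ↔ r (gg * x2 * z ^ k) < r (gg * x3 * z ^ k) := by
        rw [← cv m2 m3, ← cv n2 n3]; exact (iffPP x2 x3).1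
      have g23 : r x2 = r x3 ↔ r (gg * x2 * z ^ k) = r (gg * x3 * z ^ k) := by
        rw [← ce m2 m3, ← ce n2 n3]; exact (iffPP x2 x3).2
      have f21 : r x2 < r x1 ↔ r (gg * x2 * z ^ k) < r (gg * x1 * z ^ k) := by
        rw [← cv m2 m1, ← cv n2 n1]; exact (iffPP x2 x1).1
      have f31 : r x3 < r x1 ↔ r (gg * x3 * z ^ k) < r (gg * x1 * z ^ k) := by
        rw [← cv m3 m1, ← cv n3 n1]; exact (iffPP x3 x1).1
      have f32 : r x3 < r x2 ↔ r (gg * x3 * z ^ k) < r (gg * x2 * z ^ k) := by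
        rw [← cv m3 m2, ← cv n3 n2]; exact (iffPP x3 x2).1
      simp only [Zc]; split_ifs <;> omega
    · -- P P N
      rw [if_pos hP1] at e1; rw [if_pos hP2] at e2; rw [if_neg hP3] at e3
      rw [e1, e2, e3]
      have n1 : gg * x1 * z ^ k ∈ L := e1 ▸ m4
      have n2 : gg * x2 * z ^ k ∈ L := e2 ▸ m5
      have n3 : gg * x3 * z ^ k * z⁻¹ ∈ L := e3 ▸ m6
      have f12 : r x1 < r x2 ↔ r (gg * x1 * z ^ k) < r (gg * x2 * z ^ k) := by
        rw [← cv m1 m2, ← cv n1 n2]; exact (iffPP x1 x2).1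
      have f21 : r x2 < r x1 ↔ r (gg * x2 * z ^ k) < r (gg * x1 * z ^ k) := by
        rw [← cv m2 m1, ← cv n2 n1]; exact (iffPP x2 x1).1
      have g12 : r x1 = r x2 ↔ r (gg * x1 * z ^ k) = r (gg * x2 * z ^ k) := by
        rw [← ce m1 m2, ← ce n1 n2]; exact (iffPP x1 x2).2
      obtain ⟨p13, q13⟩ := mixed x1 x3 hx11 hx32 hP1 hP3
      obtain ⟨p23, q23⟩ := mixed x2 x3 hx21 hx32 hP2 hP3
      have f13 : r x1 < r x3 := (cv m1 m3).1 p13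
      have f23 : r x2 < r x3 := (cv m2 m3).1 p23
      have q13' : r (gg * x3 * z ^ k * z⁻¹) < r (gg * x1 * z ^ k) := (cv n3 n1).1 q13
      have q23' : r (gg * x3 * z ^ k * z⁻¹) < r (gg * x2 * z ^ k) := (cv n3 n2).1 q23
      simp only [Zc]; split_ifs <;> omega
    · -- P N P
      rw [if_pos hP1] at e1; rw [if_neg hP2] at e2; rw [if_pos hP3] at e3
      rw [e1, e2, e3]
      have n1 : gg * x1 * z ^ k ∈ L := e1 ▸ m4
      have n2 : gg * x2 * z ^ k * z⁻¹ ∈ L := e2 ▸ m5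
      have n3 : gg * x3 * z ^ k ∈ L := e3 ▸ m6
      have f13 : r x1 < r x3 ↔ r (gg * x1 * z ^ k) < r (gg * x3 * z ^ k) := by
        rw [← cv m1 m3, ← cv n1 n3]; exact (iffPP x1 x3).1
      have f31 : r x3 < r x1 ↔ r (gg * x3 * z ^ k) < r (gg * x1 * z ^ k) := by
        rw [← cv m3 m1, ← cv n3 n1]; exact (iffPP x3 x1).1
      have g13 : r x1 = r x3 ↔ r (gg * x1 * z ^ k) = r (gg * x3 * z ^ k) := by
        rw [← ce m1 m3, ← ce n1 n3]; exact (iffPP x1 x3).2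
      obtain ⟨p12, q12⟩ := mixed x1 x2 hx11 hx22 hP1 hP2
      obtain ⟨p32, q32⟩ := mixed x3 x2 hx31 hx22 hP3 hP2
      have f12 : r x1 < r x2 := (cv m1 m2).1 p12
      have f32 : r x3 < r x2 := (cv m3 m2).1 p32
      have q12' : r (gg * x2 * z ^ k * z⁻¹) < r (gg * x1 * z ^ k) := (cv n2 n1).1 q12
      have q32' : r (gg * x2 * z ^ k * z⁻¹) < r (gg * x3 * z ^ k) := (cv n2 n3).1 q32
      simp only [Zc]; split_ifs <;> omega
    · -- P N N
      rw [if_pos hP1] at e1; rw [if_neg hP2] at e2; rw [if_neg hP3] at e3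
      rw [e1, e2, e3]
      have n1 : gg * x1 * z ^ k ∈ L := e1 ▸ m4
      have n2 : gg * x2 * z ^ k * z⁻¹ ∈ L := e2 ▸ m5
      have n3 : gg * x3 * z ^ k * z⁻¹ ∈ L := e3 ▸ m6
      have f23 : r x2 < r x3 ↔ r (gg * x2 * z ^ k * z⁻¹) < r (gg * x3 * z ^ k * z⁻¹) := by
        rw [← cv m2 m3, ← cv n2 n3]
        exact (iffPP x2 x3).1.trans (iffI _ _).1
      have f32 : r x3 < r x2 ↔ r (gg * x3 * z ^ k * z⁻¹) < r (gg * x2 * z ^ k * z⁻¹) := by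
        rw [← cv m3 m2, ← cv n3 n2]
        exact (iffPP x3 x2).1.trans (iffI _ _).1
      have g23 : r x2 = r x3 ↔ r (gg * x2 * z ^ k * z⁻¹) = r (gg * x3 * z ^ k * z⁻¹) := by
        rw [← ce m2 m3, ← ce n2 n3]
        exact (iffPP x2 x3).2.trans (iffI _ _).2
      obtain ⟨p12, q12⟩ := mixed x1 x2 hx11 hx22 hP1 hP2
      obtain ⟨p13, q13⟩ := mixed x1 x3 hx11 hx32 hP1 hP3
      have f12 : r x1 < r x2 := (cv m1 m2).1 p12
      have f13 : r x1 < r x3 := (cv m1 m3).1 p13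
      have q12' : r (gg * x2 * z ^ k * z⁻¹) < r (gg * x1 * z ^ k) := (cv n2 n1).1 q12
      have q13' : r (gg * x3 * z ^ k * z⁻¹) < r (gg * x1 * z ^ k) := (cv n3 n1).1 q13
      simp only [Zc]; split_ifs <;> omega
    · -- N P P
      rw [if_neg hP1] at e1; rw [if_pos hP2] at e2; rw [if_pos hP3] at e3
      rw [e1, e2, e3]
      have n1 : gg * x1 * z ^ k * z⁻¹ ∈ L := e1 ▸ m4
      have n2 : gg * x2 * z ^ k ∈ L := e2 ▸ m5
      have n3 : gg * x3 * z ^ k ∈ L := e3 ▸ m6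
      have f23 : r x2 < r x3 ↔ r (gg * x2 * z ^ k) < r (gg * x3 * z ^ k) := by
        rw [← cv m2 m3, ← cv n2 n3]; exact (iffPP x2 x3).1
      have f32 : r x3 < r x2 ↔ r (gg * x3 * z ^ k) < r (gg * x2 * z ^ k) := by
        rw [← cv m3 m2, ← cv n3 n2]; exact (iffPP x3 x2).1
      have g23 : r x2 = r x3 ↔ r (gg * x2 * z ^ k) = r (gg * x3 * z ^ k) := by
        rw [← ce m2 m3, ← ce n2 n3]; exact (iffPP x2 x3).2
      obtain ⟨p21, q21⟩ := mixed x2 x1 hx21 hx12 hP2 hP1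
      obtain ⟨p31, q31⟩ := mixed x3 x1 hx31 hx12 hP3 hP1
      have f21 : r x2 < r x1 := (cv m2 m1).1 p21
      have f31 : r x3 < r x1 := (cv m3 m1).1 p31
      have q21' : r (gg * x1 * z ^ k * z⁻¹) < r (gg * x2 * z ^ k) := (cv n1 n2).1 q21
      have q31' : r (gg * x1 * z ^ k * z⁻¹) < r (gg * x3 * z ^ k) := (cv n1 n3).1 q31
      simp only [Zc]; split_ifs <;> omega
    · -- N P N
      rw [if_neg hP1] at e1; rw [if_pos hP2] at e2; rw [if_neg hP3] at e3
      rw [e1, e2, e3]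
      have n1 : gg * x1 * z ^ k * z⁻¹ ∈ L := e1 ▸ m4
      have n2 : gg * x2 * z ^ k ∈ L := e2 ▸ m5
      have n3 : gg * x3 * z ^ k * z⁻¹ ∈ L := e3 ▸ m6
      have f13 : r x1 < r x3 ↔ r (gg * x1 * z ^ k * z⁻¹) < r (gg * x3 * z ^ k * z⁻¹) := by
        rw [← cv m1 m3, ← cv n1 n3]
        exact (iffPP x1 x3).1.trans (iffI _ _).1
      have f31 : r x3 < r x1 ↔ r (gg * x3 * z ^ k * z⁻¹) < r (gg * x1 * z ^ k * z⁻¹) := by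
        rw [← cv m3 m1, ← cv n3 n1]
        exact (iffPP x3 x1).1.trans (iffI _ _).1
      have g13 : r x1 = r x3 ↔ r (gg * x1 * z ^ k * z⁻¹) = r (gg * x3 * z ^ k * z⁻¹) := by
        rw [← ce m1 m3, ← ce n1 n3]
        exact (iffPP x1 x3).2.trans (iffI _ _).2
      obtain ⟨p21, q21⟩ := mixed x2 x1 hx21 hx12 hP2 hP1
      obtain ⟨p23, q23⟩ := mixed x2 x3 hx21 hx32 hP2 hP3
      have f21 : r x2 < r x1 := (cv m2 m1).1 p21
      have f23 : r x2 < r x3 := (cv m2 m3).1 p23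
      have q21' : r (gg * x1 * z ^ k * z⁻¹) < r (gg * x2 * z ^ k) := (cv n1 n2).1 q21
      have q23' : r (gg * x3 * z ^ k * z⁻¹) < r (gg * x2 * z ^ k) := (cv n3 n2).1 q23
      simp only [Zc]; split_ifs <;> omega
    · -- N N P
      rw [if_neg hP1] at e1; rw [if_neg hP2] at e2; rw [if_pos hP3] at e3
      rw [e1, e2, e3]
      have n1 : gg * x1 * z ^ k * z⁻¹ ∈ L := e1 ▸ m4
      have n2 : gg * x2 * z ^ k * z⁻¹ ∈ L := e2 ▸ m5
      have n3 : gg * x3 * z ^ k ∈ L := e3 ▸ m6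
      have f12 : r x1 < r x2 ↔ r (gg * x1 * z ^ k * z⁻¹) < r (gg * x2 * z ^ k * z⁻¹) := by
        rw [← cv m1 m2, ← cv n1 n2]
        exact (iffPP x1 x2).1.trans (iffI _ _).1
      have f21 : r x2 < r x1 ↔ r (gg * x2 * z ^ k * z⁻¹) < r (gg * x1 * z ^ k * z⁻¹) := by
        rw [← cv m2 m1, ← cv n2 n1]
        exact (iffPP x2 x1).1.trans (iffI _ _).1
      have g12 : r x1 = r x2 ↔ r (gg * x1 * z ^ k * z⁻¹) = r (gg * x2 * z ^ k * z⁻¹) := by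
        rw [← ce m1 m2, ← ce n1 n2]
        exact (iffPP x1 x2).2.trans (iffI _ _).2
      obtain ⟨p31, q31⟩ := mixed x3 x1 hx31 hx12 hP3 hP1
      obtain ⟨p32, q32⟩ := mixed x3 x2 hx31 hx22 hP3 hP2
      have f31 : r x3 < r x1 := (cv m3 m1).1 p31
      have f32 : r x3 < r x2 := (cv m3 m2).1 p32
      have q31' : r (gg * x1 * z ^ k * z⁻¹) < r (gg * x3 * z ^ k) := (cv n1 n3).1 q31
      have q32' : r (gg * x2 * z ^ k * z⁻¹) < r (gg * x3 * z ^ k) := (cv n2 n3).1 q32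
      simp only [Zc]; split_ifs <;> omega
    · -- NNN
      rw [if_neg hP1] at e1; rw [if_neg hP2] at e2; rw [if_neg hP3] at e3
      rw [e1, e2, e3]
      have n1 : gg * x1 * z ^ k * z⁻¹ ∈ L := e1 ▸ m4
      have n2 : gg * x2 * z ^ k * z⁻¹ ∈ L := e2 ▸ m5
      have n3 : gg * x3 * z ^ k * z⁻¹ ∈ L := e3 ▸ m6
      have f12 : r x1 < r x2 ↔ r (gg * x1 * z ^ k * z⁻¹) < r (gg * x2 * z ^ k * z⁻¹) := by
        rw [← cv m1 m2, ← cv n1 n2]; exact (iffPP x1 x2).1.trans (iffI _ _).1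
      have f21 : r x2 < r x1 ↔ r (gg * x2 * z ^ k * z⁻¹) < r (gg * x1 * z ^ k * z⁻¹) := by
        rw [← cv m2 m1, ← cv n2 n1]; exact (iffPP x2 x1).1.trans (iffI _ _).1
      have f13 : r x1 < r x3 ↔ r (gg * x1 * z ^ k * z⁻¹) < r (gg * x3 * z ^ k * z⁻¹) := by
        rw [← cv m1 m3, ← cv n1 n3]; exact (iffPP x1 x3).1.trans (iffI _ _).1
      have f31 : r x3 < r x1 ↔ r (gg * x3 * z ^ k * z⁻¹) < r (gg * x1 * z ^ k * z⁻¹) := by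
        rw [← cv m3 m1, ← cv n3 n1]; exact (iffPP x3 x1).1.trans (iffI _ _).1
      have f23 : r x2 < r x3 ↔ r (gg * x2 * z ^ k * z⁻¹) < r (gg * x3 * z ^ k * z⁻¹) := by
        rw [← cv m2 m3, ← cv n2 n3]; exact (iffPP x2 x3).1.trans (iffI _ _).1
      have f32 : r x3 < r x2 ↔ r (gg * x3 * z ^ k * z⁻¹) < r (gg * x2 * z ^ k * z⁻¹) := by
        rw [← cv m3 m2, ← cv n3 n2]; exact (iffPP x3 x2).1.trans (iffI _ _).1
      have g12 : r x1 = r x2 ↔ r (gg * x1 * z ^ k * z⁻¹) = r (gg * x2 * z ^ k * z⁻¹) := by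
        rw [← ce m1 m2, ← ce n1 n2]; exact (iffPP x1 x2).2.trans (iffI _ _).2
      have g13 : r x1 = r x3 ↔ r (gg * x1 * z ^ k * z⁻¹) = r (gg * x3 * z ^ k * z⁻¹) := by
        rw [← ce m1 m3, ← ce n1 n3]; exact (iffPP x1 x3).2.trans (iffI _ _).2
      have g23 : r x2 = r x3 ↔ r (gg * x2 * z ^ k * z⁻¹) = r (gg * x3 * z ^ k * z⁻¹) := by
        rw [← ce m2 m3, ← ce n2 n3]; exact (iffPP x2 x3).2.trans (iffI _ _).2
      simp only [Zc]; split_ifs <;> omega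
  · -- the explicit description
    intro g1 g2 g3 x1 x2 x3 h1 h2 h3 hne12 hne23 hne13
    dsimp only
    have e1 : nf (Quotient.out (g1 : G ⧸ Subgroup.zpowers z)) = x1 := by
      rw [rep_mk]; exact (nf_unique g1 x1 h1).symm
    have e2 : nf (Quotient.out (g2 : G ⧸ Subgroup.zpowers z)) = x2 := by
      rw [rep_mk]; exact (nf_unique g2 x2 h2).symm
    have e3 : nf (Quotient.out (g3 : G ⧸ Subgroup.zpowers z)) = x3 := by
      rw [rep_mk]; exact (nf_unique g3 x3 h3).symm
    rw [e1, e2, e3]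
    have d12 : x1 ≠ x2 := fun e => hne12 (rep_inj _ _ (by rw [e1, e2]; exact e))
    have d23 : x2 ≠ x3 := fun e => hne23 (rep_inj _ _ (by rw [e2, e3]; exact e))
    have d13 : x1 ≠ x3 := fun e => hne13 (rep_inj _ _ (by rw [e1, e3]; exact e))
    have hne : ¬(x1 = x2 ∨ x2 = x3 ∨ x1 = x3) := by tauto
    simp only [Fc, if_neg hne]
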